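/- Let n be a positive integer and let M and N be n×n real matrices with rank(M) = r, rank(N) = n − r, and M + N invertible. Then M(M+N)⁻¹N = 0. -/
import Mathlib


open Matrix

/-- If `rank M = r`, `rank N = n - r` and `M + N` is invertible, then
`M (M + N)⁻¹ N = 0`. -/
theorem mul_inv_add_mul_eq_zero {n r : ℕ} (hn : 0 < n)
    (M N : Matrix (Fin n) (Fin n) ℝ)
    (hM : M.rank = r) (hN : N.rank = n - r) (hMN : IsUnit (M + N)) :
    M * (M + N)⁻¹ * N = 0 := by
  set S := M + N with hS
  have hdet : IsUnit S.det := (Matrix.isUnit_iff_isUnit_det S).mp hMN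
  have hdet' : IsUnit S⁻¹.det := S.isUnit_nonsing_inv_det hdet
  set A := S⁻¹ * M with hA
  set B := S⁻¹ * N with hB
  have hAB : A + B = 1 := by
    rw [hA, hB, ← Matrix.mul_add, ← hS, Matrix.nonsing_inv_mul S hdet]
  have hrA : A.rank = r := by
    rw [hA, Matrix.rank_mul_eq_right_of_isUnit_det S⁻¹ M hdet', hM]
  have hrB : B.rank = n - r := by
    rw [hB, Matrix.rank_mul_eq_right_of_isUnit_det S⁻¹ N hdet', hN]
  have hrle : r ≤ n := by
    rw [← hM]; simpa using M.rank_le_card_width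
  -- submodule argument
  set a := A.mulVecLin with ha
  set b := B.mulVecLin with hb
  have hab : a + b = LinearMap.id := by
    rw [ha, hb, ← Matrix.mulVecLin_add, hAB, Matrix.mulVecLin_one]
  have hsup : LinearMap.range a ⊔ LinearMap.range b = ⊤ := by
    rw [eq_top_iff]
    intro x _
    have : a x + b x = x := by
      have := congrFun (congrArg DFunLike.coe hab) x
      simpa using this
    rw [← this]
    exact Submodule.add_mem_sup (LinearMap.mem_range_self a x) (LinearMap.mem_range_self b x)
  have hfin : Module.finrank ℝ (LinearMap.range a ⊓ LinearMap.range b : Submodule ℝ (Fin n → ℝ)) = 0 := by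
    have h1 := Submodule.finrank_sup_add_finrank_inf_eq (LinearMap.range a) (LinearMap.range b)
    rw [hsup] at h1
    have h2 : Module.finrank ℝ (⊤ : Submodule ℝ (Fin n → ℝ)) = n := by
      simp
    have h3 : Module.finrank ℝ (LinearMap.range a) = r := hrA
    have h4 : Module.finrank ℝ (LinearMap.range b) = n - r := hrB
    omega
  have hinf : LinearMap.range a ⊓ LinearMap.range b = ⊥ :=
    Submodule.finrank_eq_zero.mp hfin
  have habzero : A * B = 0 := by
    have key : ∀ x, (A * B).mulVec x = 0 := by
      intro x
      have h1 : A.mulVec (B.mulVec x) ∈ LinearMap.range a := ⟨B.mulVec x, rfl⟩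
      have h2 : A.mulVec (B.mulVec x) ∈ LinearMap.range b := by
        have : a (b x) = b x - b (b x) := by
          have hx := congrFun (congrArg DFunLike.coe hab) (b x)
          simp only [LinearMap.add_apply, LinearMap.id_apply] at hx
          linear_combination (norm := abel) hx
        refine ⟨x - b x, ?_⟩
        rw [map_sub]
        have ha' : a (b x) = A.mulVec (B.mulVec x) := rfl
        exact this.symm.trans ha'
      have := hinf ▸ Submodule.mem_inf.mpr ⟨h1, h2⟩
      rw [Submodule.mem_bot] at this
      rw [← Matrix.mulVec_mulVec]
      exact this
    ext i j
    have := congrFun (key (Pi.single j 1)) i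
    simpa [Matrix.mulVec_single] using this
  calc M * S⁻¹ * N = S * (A * B) := by
        rw [hA, hB]
        simp only [← Matrix.mul_assoc]
        rw [Matrix.mul_nonsing_inv S hdet, Matrix.one_mul]
    _ = 0 := by rw [habzero, Matrix.mul_zero]
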